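/- For any distribution P on S_n and any bucket order C = (C_1,...,C_K), the minimum over all bucket distributions P' associated to C of the 1-Wasserstein distance W(P,P') with Kendall's τ cost equals Λ_P(C) = Σ_{i ≺_C j} p_{j,i}, i.e., the sum over all inter-bucket pairs (i,j) with i in an earlier bucket than j of the probability p_{j,i} = P(Σ(j)<Σ(i)). -/

import Mathlib

open Finset

/-- Kendall's τ distance. -/
def kendallTau {n : ℕ} (σ σ' : Equiv.Perm (Fin n)) : ℕ :=
  (Finset.univ.filter (fun p : Fin n × Fin n =>
    p.1 < p.2 ∧ ¬((σ p.1 < σ p.2) ↔ (σ' p.1 < σ' p.2)))).card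

/-- Pairwise marginal `p_{i,j} = P(σ(i) < σ(j))`. -/
def pairwiseMarginal {n : ℕ} (P : Equiv.Perm (Fin n) → ℝ) (i j : Fin n) : ℝ :=
  ∑ σ : Equiv.Perm (Fin n), if σ i < σ j then P σ else 0

/-- `μ` is a coupling of the distributions `P` and `P'` on `S_n`. -/
def IsCoupling {n : ℕ} (P P' : Equiv.Perm (Fin n) → ℝ)
    (μ : Equiv.Perm (Fin n) × Equiv.Perm (Fin n) → ℝ) : Prop :=
  (∀ q, 0 ≤ μ q) ∧ (∀ σ, ∑ σ' : Equiv.Perm (Fin n), μ (σ, σ') = P σ) ∧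
    (∀ σ', ∑ σ : Equiv.Perm (Fin n), μ (σ, σ') = P' σ')

/-- `P'` is a probability distribution on `S_n`. -/
def IsDist {n : ℕ} (P' : Equiv.Perm (Fin n) → ℝ) : Prop :=
  (∀ σ, 0 ≤ P' σ) ∧ ∑ σ : Equiv.Perm (Fin n), P' σ = 1

/-- `P'` is a bucket distribution associated to the bucket assignment `b`:
with probability one, items in an earlier bucket are ranked lower. -/
def IsBucketDist {n K : ℕ} (b : Fin n → Fin K)
    (P' : Equiv.Perm (Fin n) → ℝ) : Prop :=
  ∀ i j, b i < b j → pairwiseMarginal P' j i = 0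

section aux
variable {n K : ℕ}

/-- Rank of `i` under an injective key function `f`. -/
def rankFun (f : Fin n → ℕ) (i : Fin n) : Fin n :=
  ⟨(univ.filter (fun j => f j < f i)).card, by
    have hsub : (univ.filter (fun j => f j < f i)) ⊆ univ.erase i := by
      intro j hj
      simp only [mem_filter, mem_univ, true_and] at hj
      exact mem_erase.mpr ⟨fun h => by simp [h] at hj, mem_univ j⟩
    calc (univ.filter (fun j => f j < f i)).card
        ≤ (univ.erase i).card := card_le_card hsub
      _ < univ.card := card_erase_lt_of_mem (mem_univ i)
      _ = n := by simp⟩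

lemma rankFun_lt {f : Fin n → ℕ} {i j : Fin n} (h : f i < f j) :
    rankFun f i < rankFun f j := by
  have hsub : (univ.filter (fun k => f k < f i)) ⊆ univ.filter (fun k => f k < f j) := by
    intro k hk
    simp only [mem_filter, mem_univ, true_and] at hk ⊢
    exact hk.trans h
  have hss : (univ.filter (fun k => f k < f i)) ⊂ univ.filter (fun k => f k < f j) := by
    refine (Finset.ssubset_iff_of_subset hsub).mpr ⟨i, ?_, ?_⟩
    · simp [h]
    · simp
  exact Finset.card_lt_card hss

lemma rankFun_inj {f : Fin n → ℕ} (hf : Function.Injective f) :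
    Function.Injective (rankFun f) := by
  intro i j hij
  by_contra hne
  have hfne : f i ≠ f j := fun h => hne (hf h)
  rcases lt_or_gt_of_ne hfne with h | h
  · exact absurd hij (ne_of_lt (rankFun_lt h))
  · exact absurd hij.symm (ne_of_lt (rankFun_lt h))

lemma rankFun_lt_iff {f : Fin n → ℕ} (hf : Function.Injective f) (i j : Fin n) :
    rankFun f i < rankFun f j ↔ f i < f j := by
  constructor
  · intro h
    by_contra h'
    rcases eq_or_lt_of_le (not_lt.mp h') with he | hl
    · exact absurd h (by rw [hf he.symm]; exact lt_irrefl _)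
    · exact absurd h (not_lt.mpr (le_of_lt (rankFun_lt hl)))
  · exact rankFun_lt

/-- Lexicographic key: bucket first, then current rank. -/
def keyOf (b : Fin n → Fin K) (σ : Equiv.Perm (Fin n)) (i : Fin n) : ℕ :=
  (b i : ℕ) * n + (σ i : ℕ)

lemma keyOf_lt_iff (b : Fin n → Fin K) (σ : Equiv.Perm (Fin n)) (i j : Fin n) :
    keyOf b σ i < keyOf b σ j ↔ b i < b j ∨ (b i = b j ∧ σ i < σ j) := by
  unfold keyOf
  have h1 : (σ i : ℕ) < n := (σ i).isLt
  have h2 : (σ j : ℕ) < n := (σ j).isLt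
  rcases lt_trichotomy (b i) (b j) with h | h | h
  · have hn : ((b i : ℕ) + 1) * n ≤ (b j : ℕ) * n :=
      Nat.mul_le_mul_right n (Fin.lt_def.mp h)
    rw [add_mul, one_mul] at hn
    constructor
    · intro _; exact Or.inl h
    · intro _; omega
  · simp only [h, lt_irrefl, false_or, true_and, Fin.lt_def]
    constructor
    · intro hk
      have : (b j : ℕ) * n + (σ i : ℕ) < (b j : ℕ) * n + (σ j : ℕ) := by
        have := Fin.val_eq_val (b i) (b j)
        have hbe : (b i : ℕ) = (b j : ℕ) := by rw [h]
        omega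
      omega
    · intro hs
      have hbe : (b i : ℕ) = (b j : ℕ) := by rw [h]
      omega
  · have hn : ((b j : ℕ) + 1) * n ≤ (b i : ℕ) * n :=
      Nat.mul_le_mul_right n (Fin.lt_def.mp h)
    rw [add_mul, one_mul] at hn
    constructor
    · intro hk; omega
    · rintro (h' | ⟨h', _⟩)
      · exact absurd h' (asymm h)
      · exact absurd h' (ne_of_gt h)

lemma keyOf_injective (b : Fin n → Fin K) (σ : Equiv.Perm (Fin n)) :
    Function.Injective (keyOf b σ) := by
  intro i j hij
  by_contra hne
  have hσ : σ i ≠ σ j := fun h => hne (σ.injective h)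
  have hcases : keyOf b σ i < keyOf b σ j ∨ keyOf b σ j < keyOf b σ i := by
    rcases lt_trichotomy (b i) (b j) with h | h | h
    · exact Or.inl ((keyOf_lt_iff b σ i j).mpr (Or.inl h))
    · rcases lt_or_gt_of_ne (Fin.val_ne_of_ne hσ) with hs | hs
      · exact Or.inl ((keyOf_lt_iff b σ i j).mpr (Or.inr ⟨h, Fin.lt_def.mpr hs⟩))
      · exact Or.inr ((keyOf_lt_iff b σ j i).mpr (Or.inr ⟨h.symm, Fin.lt_def.mpr hs⟩))
    · exact Or.inr ((keyOf_lt_iff b σ j i).mpr (Or.inl h))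
  omega

/-- The bucket-sorted version of `σ`. -/
noncomputable def bucketize (b : Fin n → Fin K) (σ : Equiv.Perm (Fin n)) : Equiv.Perm (Fin n) :=
  Equiv.ofBijective (rankFun (keyOf b σ))
    ((Finite.injective_iff_bijective).mp (rankFun_inj (keyOf_injective b σ)))

lemma bucketize_lt_iff (b : Fin n → Fin K) (σ : Equiv.Perm (Fin n)) (i j : Fin n) :
    bucketize b σ i < bucketize b σ j ↔ b i < b j ∨ (b i = b j ∧ σ i < σ j) := by
  rw [show (bucketize b σ i < bucketize b σ j) ↔
      rankFun (keyOf b σ) i < rankFun (keyOf b σ) j from Iff.rfl,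
    rankFun_lt_iff (keyOf_injective b σ), keyOf_lt_iff]

end aux

section cnt
variable {n K : ℕ}

lemma kendall_bucketize (b : Fin n → Fin K) (σ : Equiv.Perm (Fin n)) :
    kendallTau σ (bucketize b σ) =
      (univ.filter (fun p : Fin n × Fin n => b p.1 < b p.2 ∧ σ p.2 < σ p.1)).card := by
  unfold kendallTau
  apply Finset.card_bij' (fun p _ => if b p.1 < b p.2 then p else (p.2, p.1))
    (fun p _ => if p.1 < p.2 then p else (p.2, p.1))
  · -- forward maps into target
    intro p hp
    simp only [mem_filter, mem_univ, true_and] at hp ⊢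
    obtain ⟨hlt, hdis⟩ := hp
    have hT := bucketize_lt_iff b σ p.1 p.2
    have hT' := bucketize_lt_iff b σ p.2 p.1
    have hne : p.1 ≠ p.2 := ne_of_lt hlt
    have hσne : σ p.1 ≠ σ p.2 := fun h => hne (σ.injective h)
    rcases lt_trichotomy (b p.1) (b p.2) with h | h | h
    · simp only [if_pos h]
      refine ⟨h, ?_⟩
      have hTtrue : bucketize b σ p.1 < bucketize b σ p.2 := hT.mpr (Or.inl h)
      have : ¬ (σ p.1 < σ p.2) := fun hs => hdis ⟨fun _ => hTtrue, fun _ => hs⟩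
      exact lt_of_le_of_ne (not_lt.mp this) hσne.symm
    · exfalso
      apply hdis
      constructor
      · intro hs; exact hT.mpr (Or.inr ⟨h, hs⟩)
      · intro hTs
        rcases hT.mp hTs with h' | ⟨_, h'⟩
        · exact absurd h' (by rw [h]; exact lt_irrefl _)
        · exact h'
    · have hnb : ¬ (b p.1 < b p.2) := asymm h
      simp only [if_neg hnb]
      refine ⟨h, ?_⟩
      have hTfalse : ¬ (bucketize b σ p.1 < bucketize b σ p.2) := by
        intro hTs
        rcases hT.mp hTs with h' | ⟨h', _⟩
        · exact asymm h h'
        · exact (ne_of_gt h) h'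
      have : σ p.1 < σ p.2 := by
        by_contra hs
        exact hdis ⟨fun h' => absurd h' hs, fun h' => absurd h' hTfalse⟩
      exact this
  · -- backward maps into source
    intro p hp
    simp only [mem_filter, mem_univ, true_and] at hp ⊢
    obtain ⟨hb', hσ'⟩ := hp
    have hT := bucketize_lt_iff b σ p.1 p.2
    have hne : p.1 ≠ p.2 := fun h => (ne_of_gt hb') (congrArg b h).symm
    rcases lt_or_gt_of_ne hne with h | h
    · simp only [if_pos h]
      refine ⟨h, fun hdis => ?_⟩
      have hTtrue : bucketize b σ p.1 < bucketize b σ p.2 := hT.mpr (Or.inl hb')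
      exact absurd (hdis.mpr hTtrue) (not_lt.mpr (le_of_lt hσ'))
    · have hnl : ¬ (p.1 < p.2) := asymm h
      simp only [if_neg hnl]
      refine ⟨h, fun hdis => ?_⟩
      have hTfalse : ¬ (bucketize b σ p.2 < bucketize b σ p.1) := by
        intro hTs
        rcases (bucketize_lt_iff b σ p.2 p.1).mp hTs with h' | ⟨h', _⟩
        · exact asymm hb' h'
        · exact (ne_of_lt hb') h'.symm
      exact hTfalse (hdis.mp hσ')
  · -- left inverse
    intro p hp
    simp only [mem_filter, mem_univ, true_and] at hp
    by_cases h : b p.1 < b p.2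
    · simp [h, hp.1]
    · simp [h, asymm hp.1]
  · -- right inverse
    intro p hp
    simp only [mem_filter, mem_univ, true_and] at hp
    by_cases h : p.1 < p.2
    · simp [h, hp.1]
    · simp [h, asymm hp.1]

end cnt

section lb
variable {n K : ℕ}

lemma kendall_ge (b : Fin n → Fin K) (σ σ' : Equiv.Perm (Fin n))
    (h : ∀ i j, b i < b j → σ' i < σ' j) :
    (univ.filter (fun p : Fin n × Fin n => b p.1 < b p.2 ∧ σ p.2 < σ p.1)).card ≤
      kendallTau σ σ' := by
  unfold kendallTau
  apply Finset.card_le_card_of_injOn (fun p => if p.1 < p.2 then p else (p.2, p.1))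
  · intro p hp
    simp only [mem_coe, mem_filter, mem_univ, true_and] at hp ⊢
    obtain ⟨hb', hσ⟩ := hp
    have hσ' : σ' p.1 < σ' p.2 := h _ _ hb'
    have hne : p.1 ≠ p.2 := fun he => (ne_of_lt hb') (congrArg b he)
    rcases lt_or_gt_of_ne hne with hlt | hgt
    · simp only [if_pos hlt]
      exact ⟨hlt, fun hdis => absurd (hdis.mpr hσ') (not_lt.mpr (le_of_lt hσ))⟩
    · have hnl : ¬ (p.1 < p.2) := asymm hgt
      simp only [if_neg hnl]
      exact ⟨hgt, fun hdis => absurd (hdis.mp hσ) (not_lt.mpr (le_of_lt hσ'))⟩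
  · intro p hp q hq he
    simp only [mem_coe, mem_filter, mem_univ, true_and] at hp hq
    by_cases h1 : p.1 < p.2 <;> by_cases h2 : q.1 < q.2 <;>
      simp only [if_pos, if_neg, h1, h2, if_true, if_false] at he
    · exact he
    · -- p kept, q swapped : p = (q.2, q.1)
      exfalso
      have e1 : p.1 = q.2 := congrArg Prod.fst he
      have e2 : p.2 = q.1 := congrArg Prod.snd he
      rw [e1, e2] at hp
      exact asymm hq.1 hp.1
    · exfalso
      have e1 : q.1 = p.2 := (congrArg Prod.fst he).symm
      have e2 : q.2 = p.1 := (congrArg Prod.snd he).symm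
      rw [e1, e2] at hq
      exact asymm hp.1 hq.1
    · have e1 : p.2 = q.2 := congrArg Prod.fst he
      have e2 : p.1 = q.1 := congrArg Prod.snd he
      exact Prod.ext e2 e1

end lb

section sums
variable {n K : ℕ}

lemma sum_mul_D (b : Fin n → Fin K) (Q : Equiv.Perm (Fin n) → ℝ) :
    ∑ σ : Equiv.Perm (Fin n), Q σ *
        ((univ.filter (fun p : Fin n × Fin n => b p.1 < b p.2 ∧ σ p.2 < σ p.1)).card : ℝ)
      = ∑ p ∈ univ.filter (fun p : Fin n × Fin n => b p.1 < b p.2),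
          pairwiseMarginal Q p.2 p.1 := by
  have hD : ∀ σ : Equiv.Perm (Fin n),
      ((univ.filter (fun p : Fin n × Fin n => b p.1 < b p.2 ∧ σ p.2 < σ p.1)).card : ℝ)
        = ∑ p ∈ univ.filter (fun p : Fin n × Fin n => b p.1 < b p.2),
            (if σ p.2 < σ p.1 then (1:ℝ) else 0) := by
    intro σ
    rw [← Finset.filter_filter, Finset.card_filter]
    push_cast
    apply Finset.sum_congr rfl
    intro p _
    split_ifs <;> simp
  simp_rw [hD, Finset.mul_sum]
  rw [Finset.sum_comm]
  apply Finset.sum_congr rfl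
  intro p _
  unfold pairwiseMarginal
  apply Finset.sum_congr rfl
  intro σ _
  rw [mul_ite, mul_one, mul_zero]

end sums


theorem min_wasserstein_bucket {n K : ℕ} (b : Fin n → Fin K)
    (hb : Function.Surjective b) (P : Equiv.Perm (Fin n) → ℝ)
    (hP0 : ∀ σ, 0 ≤ P σ) (hP1 : ∑ σ : Equiv.Perm (Fin n), P σ = 1) :
    sInf {c : ℝ | ∃ P' μ, IsDist P' ∧ IsBucketDist b P' ∧ IsCoupling P P' μ ∧
        c = ∑ q : Equiv.Perm (Fin n) × Equiv.Perm (Fin n),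
              μ q * (kendallTau q.1 q.2 : ℝ)} =
      ∑ p ∈ Finset.univ.filter (fun p : Fin n × Fin n => b p.1 < b p.2),
        pairwiseMarginal P p.2 p.1 := by
  classical
  set Λ : ℝ := ∑ p ∈ Finset.univ.filter (fun p : Fin n × Fin n => b p.1 < b p.2),
      pairwiseMarginal P p.2 p.1 with hΛ
  set S : Set ℝ := {c : ℝ | ∃ P' μ, IsDist P' ∧ IsBucketDist b P' ∧ IsCoupling P P' μ ∧
      c = ∑ q : Equiv.Perm (Fin n) × Equiv.Perm (Fin n),
            μ q * (kendallTau q.1 q.2 : ℝ)} with hS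
  -- Membership: the bucketized pushforward achieves Λ
  have hmem : Λ ∈ S := by
    refine ⟨(fun σ' => ∑ σ : Equiv.Perm (Fin n), if bucketize b σ = σ' then P σ else 0),
      (fun q => if bucketize b q.1 = q.2 then P q.1 else 0), ?_, ?_, ?_, ?_⟩
    · constructor
      · intro σ'
        apply Finset.sum_nonneg
        intro σ _
        split_ifs
        exacts [hP0 σ, le_rfl]
      · rw [Finset.sum_comm]
        simp_rw [Finset.sum_ite_eq, Finset.mem_univ, if_true]
        exact hP1
    · intro i j hij
      unfold pairwiseMarginal
      have hsplit : ∀ σ' : Equiv.Perm (Fin n),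
          (if σ' j < σ' i then
            (∑ σ : Equiv.Perm (Fin n), if bucketize b σ = σ' then P σ else 0) else 0)
          = ∑ σ : Equiv.Perm (Fin n),
              if bucketize b σ = σ' then (if σ' j < σ' i then P σ else 0) else 0 := by
        intro σ'
        split_ifs with h
        · exact Finset.sum_congr rfl fun σ _ => by simp [h]
        · simp [h]
      simp_rw [hsplit]
      rw [Finset.sum_comm]
      simp_rw [Finset.sum_ite_eq, Finset.mem_univ, if_true]
      apply Finset.sum_eq_zero
      intro σ _
      rw [if_neg]
      exact asymm ((bucketize_lt_iff b σ i j).mpr (Or.inl hij))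
    · refine ⟨?_, ?_, ?_⟩
      · intro q
        dsimp only
        split_ifs
        exacts [hP0 _, le_rfl]
      · intro σ
        dsimp only
        rw [Finset.sum_ite_eq]
        simp
      · intro σ'
        rfl
    · rw [Fintype.sum_prod_type]
      simp_rw [ite_mul, zero_mul, Finset.sum_ite_eq, Finset.mem_univ, if_true]
      simp_rw [kendall_bucketize b]
      exact (sum_mul_D b P).symm
  -- Lower bound
  have hlb : ∀ c ∈ S, Λ ≤ c := by
    rintro c ⟨P', μ, hdist, hbd, ⟨hμ0, hμ1, hμ2⟩, rfl⟩
    have hsupp : ∀ q : Equiv.Perm (Fin n) × Equiv.Perm (Fin n), ∀ i j : Fin n,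
        b i < b j → ¬ (q.2 i < q.2 j) → μ q = 0 := by
      intro q i j hij hns
      have hne : i ≠ j := fun h => (ne_of_lt hij) (congrArg b h)
      have hlt : q.2 j < q.2 i :=
        lt_of_le_of_ne (not_lt.mp hns) (fun h => hne (q.2.injective h).symm)
      have hP'z : P' q.2 = 0 := by
        have h0 := hbd i j hij
        unfold pairwiseMarginal at h0
        have hnn : ∀ σ' ∈ (Finset.univ : Finset (Equiv.Perm (Fin n))),
            0 ≤ (if σ' j < σ' i then P' σ' else 0) := by
          intro σ' _
          split_ifs
          exacts [hdist.1 σ', le_rfl]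
        have := (Finset.sum_eq_zero_iff_of_nonneg hnn).mp h0 q.2 (Finset.mem_univ _)
        rwa [if_pos hlt] at this
      have hle : μ q ≤ P' q.2 := by
        rw [← hμ2 q.2]
        have : μ q = μ (q.1, q.2) := rfl
        rw [this]
        exact Finset.single_le_sum (fun σ _ => hμ0 (σ, q.2)) (Finset.mem_univ q.1)
      exact le_antisymm (hle.trans_eq hP'z) (hμ0 q)
    have hpt : ∀ q : Equiv.Perm (Fin n) × Equiv.Perm (Fin n),
        μ q * ((Finset.univ.filter (fun p : Fin n × Fin n =>
            b p.1 < b p.2 ∧ q.1 p.2 < q.1 p.1)).card : ℝ)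
          ≤ μ q * (kendallTau q.1 q.2 : ℝ) := by
      intro q
      rcases eq_or_lt_of_le (hμ0 q) with h | h
      · rw [← h, zero_mul, zero_mul]
      · apply mul_le_mul_of_nonneg_left _ (le_of_lt h)
        have := kendall_ge b q.1 q.2 (fun i j hij => by
          by_contra hc
          exact (ne_of_gt h) (hsupp q i j hij hc))
        exact_mod_cast this
    have h2 : ∑ q : Equiv.Perm (Fin n) × Equiv.Perm (Fin n),
        μ q * ((Finset.univ.filter (fun p : Fin n × Fin n =>
            b p.1 < b p.2 ∧ q.1 p.2 < q.1 p.1)).card : ℝ)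
        = ∑ σ : Equiv.Perm (Fin n), P σ *
            ((Finset.univ.filter (fun p : Fin n × Fin n =>
              b p.1 < b p.2 ∧ σ p.2 < σ p.1)).card : ℝ) := by
      rw [Fintype.sum_prod_type]
      exact Finset.sum_congr rfl fun σ _ => by dsimp only; rw [← hμ1 σ]; exact (Finset.sum_mul univ (fun y => μ (σ, y)) ((Finset.univ.filter (fun p : Fin n × Fin n => b p.1 < b p.2 ∧ σ p.2 < σ p.1)).card : ℝ)).symm
    calc Λ = ∑ σ : Equiv.Perm (Fin n), P σ *
          ((Finset.univ.filter (fun p : Fin n × Fin n =>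
            b p.1 < b p.2 ∧ σ p.2 < σ p.1)).card : ℝ) := (sum_mul_D b P).symm
      _ = ∑ q : Equiv.Perm (Fin n) × Equiv.Perm (Fin n),
            μ q * ((Finset.univ.filter (fun p : Fin n × Fin n =>
              b p.1 < b p.2 ∧ q.1 p.2 < q.1 p.1)).card : ℝ) := h2.symm
      _ ≤ ∑ q : Equiv.Perm (Fin n) × Equiv.Perm (Fin n),
            μ q * (kendallTau q.1 q.2 : ℝ) := Finset.sum_le_sum (fun q _ => hpt q)
  exact le_antisymm (csInf_le ⟨Λ, fun c hc => hlb c hc⟩ hmem) (le_csInf ⟨Λ, hmem⟩ hlb)
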